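/- Define on V ⊕ V* the generalized metric R_G(u,ξ) = (G⁻¹ξ, Gu), where G is a nondegenerate symmetric bilinear form on V identified with the map V → V*. Let W ⊆ V be a subspace and F an alternating form on W, and define τ^F W = {(u,ξ) ∈ V ⊕ V* : u ∈ W and ξ|_W = F(u,·)}. Then R_G(τ^F W) = τ^F W if and only if (W,F) satisfies the topological bibrane condition: every pair (u,v) with u ∈ W, v ∈ V, G(v,·)|_W = F(u,·)|_W has v ∈ W and G(u,·)|_W = F(v,·)|_W. -/
import Mathlib


open Module

/-- The `F`-rotated generalized tangent space
`τ^F W = {(u,ξ) : u ∈ W, ξ|_W = F(u,·)}`. -/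
def tauF {V : Type*} [AddCommGroup V] [Module ℝ V]
    (W : Submodule ℝ V) (F : LinearMap.BilinForm ℝ W) :
    Set (V × Module.Dual ℝ V) :=
  {p | ∃ hu : p.1 ∈ W, ∀ (w : V) (hw : w ∈ W), p.2 w = F ⟨p.1, hu⟩ ⟨w, hw⟩}

/-- Proposition 6, fiberwise: the generalized metric
`R_G(u,ξ) = (G⁻¹ξ, Gu)` stabilizes `τ^F W` if and only if `(W,F)` satisfies
the topological bibrane condition. -/
theorem stmt15 {V : Type*} [AddCommGroup V] [Module ℝ V] [FiniteDimensional ℝ V]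
    (G : LinearMap.BilinForm ℝ V) (hGnd : G.Nondegenerate) (hGsymm : G.IsSymm)
    (e : V ≃ₗ[ℝ] Module.Dual ℝ V) (he : ∀ x y : V, e x y = G x y)
    (W : Submodule ℝ V) (F : LinearMap.BilinForm ℝ W) (hFalt : F.IsAlt) :
    (fun p : V × Module.Dual ℝ V => (e.symm p.2, e p.1)) '' tauF W F = tauF W F ↔
      (∀ (u : W) (v : V), (∀ w : W, G v (w : V) = F u w) →
        ∃ hv : v ∈ W, ∀ w : W, G (u : V) (w : V) = F ⟨v, hv⟩ w) := by
  constructor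
  · intro himg u v hv
    have hmem : ((u : V), e v) ∈ tauF W F := ⟨u.2, fun w hw => by
      rw [he]; exact hv ⟨w, hw⟩⟩
    have : (e.symm (e v), e (u : V)) ∈ tauF W F := by
      rw [← himg]; exact ⟨_, hmem, rfl⟩
    rw [e.symm_apply_apply] at this
    obtain ⟨h1, h2⟩ := this
    exact ⟨h1, fun w => by rw [← he]; exact h2 w w.2⟩
  · intro hcond
    have key : ∀ p ∈ tauF W F,
        ((e.symm p.2 : V), e p.1) ∈ tauF W F := by
      rintro ⟨u, ξ⟩ ⟨hu, hξ⟩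
      have hG : ∀ w : W, G (e.symm ξ) (w : V) = F ⟨u, hu⟩ w := fun w => by
        rw [← he, e.apply_symm_apply]; exact hξ w w.2
      obtain ⟨hv, hfin⟩ := hcond ⟨u, hu⟩ _ hG
      exact ⟨hv, fun w hw => by rw [he]; exact hfin ⟨w, hw⟩⟩
    ext ⟨u, ξ⟩
    constructor
    · rintro ⟨p, hp, heq⟩
      rw [← heq]
      exact key p hp
    · intro h
      refine ⟨(e.symm ξ, e u), key _ h, ?_⟩
      simp
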